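/- arXiv:1702.06905 — 3 statements merged into one kernel-verified Lean document; each statement's English description precedes it below -/
import Mathlib

section
/- Let D and S be bounded nonnegative self-adjoint operators with D ≤ S ≤ (1+c)·D. Then Dom(S^{-1/2}) = Dom(D^{-1/2}); i.e., a vector f lies in the range of S^{1/2} if and only if it lies in the range of D^{1/2}. -/
open ContinuousLinearMap

/-- Douglas-type range inclusion: if `‖A x‖ ≤ C * ‖B x‖` for all `x` and `A`, `B` are
self-adjoint, then `range A ⊆ range B`. -/
lemma douglas_range_subset {H : Type*} [NormedAddCommGroup H] [InnerProductSpace ℂ H]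
    [CompleteSpace H] (A B : H →L[ℂ] H) (hA : IsSelfAdjoint A) (hB : IsSelfAdjoint B)
    (C : ℝ) (hC : 0 ≤ C) (hle : ∀ x, ‖A x‖ ≤ C * ‖B x‖) :
    Set.range ⇑A ⊆ Set.range ⇑B := by
  rintro f ⟨g, rfl⟩
  -- the functional φ x = ⟪g, A x⟫
  set φ : H →L[ℂ] ℂ := (innerSL ℂ g).comp A with hφ
  have wd : ∀ x x' : H, B x = B x' → φ x = φ x' := by
    intro x x' h
    have h0 : A x = A x' := by
      have : ‖A (x - x')‖ ≤ C * ‖B (x - x')‖ := hle _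
      rw [map_sub, map_sub, h, sub_self, norm_zero, mul_zero] at this
      have := le_antisymm this (norm_nonneg _)
      rwa [norm_eq_zero, sub_eq_zero] at this
    simp [hφ, h0]
  set p : Submodule ℂ H := LinearMap.range (B : H →ₗ[ℂ] H) with hp
  have hmem : ∀ y : p, ∃ x : H, B x = (y : H) := fun y => y.2
  set F : p → ℂ := fun y => φ (hmem y).choose with hF
  have hFkey : ∀ (y : p) (x : H), B x = (y : H) → F y = φ x := by
    intro y x hx
    exact wd _ _ ((hmem y).choose_spec.trans hx.symm)
  -- the functional on range B
  set ℓ₀ : p →ₗ[ℂ] ℂ :=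
    { toFun := F
      map_add' := by
        intro y z
        show F (y + z) = F y + F z
        rw [hFkey (y + z) ((hmem y).choose + (hmem z).choose)
          (by rw [map_add, (hmem y).choose_spec, (hmem z).choose_spec]; rfl), map_add]
      map_smul' := by
        intro a y
        show F (a • y) = a • F y
        rw [hFkey (a • y) (a • (hmem y).choose)
          (by rw [map_smul, (hmem y).choose_spec]; rfl), map_smul] } with hℓ₀
  have hbound : ∀ y : p, ‖ℓ₀ y‖ ≤ (C * ‖g‖) * ‖y‖ := by
    intro y
    have h1 : ℓ₀ y = φ (hmem y).choose := rfl
    rw [h1, hφ]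
    calc ‖(innerSL ℂ g) (A (hmem y).choose)‖ ≤ ‖g‖ * ‖A (hmem y).choose‖ := by
          simpa using norm_inner_le_norm (𝕜 := ℂ) g (A (hmem y).choose)
      _ ≤ ‖g‖ * (C * ‖B (hmem y).choose‖) :=
          mul_le_mul_of_nonneg_left (hle _) (norm_nonneg _)
      _ = (C * ‖g‖) * ‖B (hmem y).choose‖ := by ring
      _ = (C * ‖g‖) * ‖y‖ := by rw [(hmem y).choose_spec]; rfl
  set ℓ : p →L[ℂ] ℂ := LinearMap.mkContinuous ℓ₀ (C * ‖g‖) hbound with hℓ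
  obtain ⟨ψ, hψext, -⟩ := exists_extension_norm_eq p ℓ
  set h : H := (InnerProductSpace.toDual ℂ H).symm ψ with hh
  have hinner : ∀ y : H, (inner ℂ h y : ℂ) = ψ y := fun y =>
    InnerProductSpace.toDual_symm_apply
  refine ⟨h, ?_⟩
  -- show B h = A g
  have key : ∀ x : H, (inner ℂ (B h - A g) x : ℂ) = 0 := by
    intro x
    have h1 : (inner ℂ h (B x) : ℂ) = ψ (B x) := hinner _
    have h2 : ψ (B x) = ℓ ⟨B x, LinearMap.mem_range_self _ x⟩ :=
      hψext ⟨B x, LinearMap.mem_range_self _ x⟩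
    have h3 : ℓ ⟨B x, LinearMap.mem_range_self _ x⟩ = φ x :=
      hFkey ⟨B x, LinearMap.mem_range_self _ x⟩ x rfl
    have h4 : (inner ℂ h (B x) : ℂ) = inner ℂ g (A x) := by
      rw [h1, h2, h3]; simp [hφ]
    have hBh : (inner ℂ (B h) x : ℂ) = inner ℂ h (B x) := hB.isSymmetric h x
    have hAg : (inner ℂ (A g) x : ℂ) = inner ℂ g (A x) := hA.isSymmetric g x
    rw [inner_sub_left, hBh, hAg, h4, sub_self]
  have : B h - A g = 0 := by
    have := key (B h - A g)
    rwa [inner_self_eq_zero] at this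
  exact sub_eq_zero.mp this

theorem stmt10 {H : Type*} [NormedAddCommGroup H] [InnerProductSpace ℂ H] [CompleteSpace H]
    (D S : H →L[ℂ] H) (hDsa : IsSelfAdjoint D) (hSsa : IsSelfAdjoint S)
    (c : ℝ) (hc : 0 ≤ c)
    (hDpos : ∀ f : H, 0 ≤ (inner ℂ f (D f) : ℂ).re)
    (hDS : ∀ f : H, (inner ℂ f (D f) : ℂ).re ≤ (inner ℂ f (S f) : ℂ).re)
    (hSD : ∀ f : H, (inner ℂ f (S f) : ℂ).re ≤ (1 + c) * (inner ℂ f (D f) : ℂ).re)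
    (hDinj : Function.Injective D)
    -- RD = D^{1/2}, RS = S^{1/2}
    (RD RS : H →L[ℂ] H)
    (hRDsa : IsSelfAdjoint RD) (hRDpos : ∀ f : H, 0 ≤ (inner ℂ f (RD f) : ℂ).re)
    (hRD : RD ∘L RD = D)
    (hRSsa : IsSelfAdjoint RS) (hRSpos : ∀ f : H, 0 ≤ (inner ℂ f (RS f) : ℂ).re)
    (hRS : RS ∘L RS = S) :
    ∀ f : H, f ∈ Set.range ⇑RS ↔ f ∈ Set.range ⇑RD := by
  have hDq : ∀ x : H, (inner ℂ x (D x) : ℂ).re = ‖RD x‖ ^ 2 := by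
    intro x
    have h1 : D x = RD (RD x) := by rw [← hRD]; rfl
    have h2 : (inner ℂ (RD x) (RD x) : ℂ) = inner ℂ x (RD (RD x)) := hRDsa.isSymmetric x (RD x)
    rw [h1, ← h2]
    simpa using inner_self_eq_norm_sq (𝕜 := ℂ) (RD x)
  have hSq : ∀ x : H, (inner ℂ x (S x) : ℂ).re = ‖RS x‖ ^ 2 := by
    intro x
    have h1 : S x = RS (RS x) := by rw [← hRS]; rfl
    have h2 : (inner ℂ (RS x) (RS x) : ℂ) = inner ℂ x (RS (RS x)) := hRSsa.isSymmetric x (RS x)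
    rw [h1, ← h2]
    simpa using inner_self_eq_norm_sq (𝕜 := ℂ) (RS x)
  have hDle : ∀ x : H, ‖RD x‖ ≤ 1 * ‖RS x‖ := by
    intro x
    have h := hDS x
    rw [hDq, hSq] at h
    nlinarith [norm_nonneg (RD x), norm_nonneg (RS x)]
  have hSle : ∀ x : H, ‖RS x‖ ≤ Real.sqrt (1 + c) * ‖RD x‖ := by
    intro x
    have h := hSD x
    rw [hDq, hSq] at h
    have h2 : ‖RS x‖ ^ 2 ≤ (Real.sqrt (1 + c) * ‖RD x‖) ^ 2 := by
      rw [mul_pow, Real.sq_sqrt (by linarith)]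
      exact h
    nlinarith [norm_nonneg (RS x),
      mul_nonneg (Real.sqrt_nonneg (1 + c)) (norm_nonneg (RD x))]
  intro f
  constructor
  · exact fun hf => douglas_range_subset RS RD hRSsa hRDsa (Real.sqrt (1 + c))
      (Real.sqrt_nonneg _) hSle hf
  · exact fun hf => douglas_range_subset RD RS hRDsa hRSsa 1 zero_le_one hDle hf
end

section
/- Let B be a densely defined operator on a Hilbert space H with domain 𝒟, skew-Hermitian in the sense that ⟨φ, Bψ⟩ = -⟨Bφ, ψ⟩ for all φ, ψ ∈ 𝒟. If for some α > 0 both Ker(B* + αI) = {0} and Ker(B* - αI) = {0}, then the closure of B is skew-self-adjoint, i.e., (closure B)* = -(closure B). -/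
set_option linter.unusedSectionVars false

open scoped ComplexConjugate

section Aux
variable {H : Type*} [NormedAddCommGroup H] [InnerProductSpace ℂ H] [CompleteSpace H]

local notation "⟪" x ", " y "⟫" => @inner ℂ _ _ x y

lemma aux_pairing (B : H →ₗ.[ℂ] H)
    (hskew : ∀ φ ψ : B.domain, (inner ℂ (φ : H) (B ψ) : ℂ) = -(inner ℂ (B φ) (ψ : H) : ℂ))
    {p : H × H} (hp : p ∈ B.graph.topologicalClosure) (φ : B.domain) :
    ⟪(B φ : H), p.1⟫ + ⟪(φ : H), p.2⟫ = 0 := by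
  have hcl : IsClosed {q : H × H | ⟪(B φ : H), q.1⟫ + ⟪(φ : H), q.2⟫ = (0 : ℂ)} :=
    isClosed_eq (((continuous_const.inner continuous_fst).add
      (continuous_const.inner continuous_snd))) continuous_const
  have hsub : (B.graph : Set (H × H)) ⊆
      {q : H × H | ⟪(B φ : H), q.1⟫ + ⟪(φ : H), q.2⟫ = (0 : ℂ)} := by
    rintro q hq
    rw [SetLike.mem_coe, LinearPMap.mem_graph_iff] at hq
    obtain ⟨ψ, h1, h2⟩ := hq
    simp only [Set.mem_setOf_eq, ← h1, ← h2]
    rw [hskew φ ψ]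
    ring
  exact closure_minimal hsub hcl hp

lemma aux_pairing2 (B : H →ₗ.[ℂ] H)
    (hskew : ∀ φ ψ : B.domain, (inner ℂ (φ : H) (B ψ) : ℂ) = -(inner ℂ (B φ) (ψ : H) : ℂ))
    {p q : H × H} (hp : p ∈ B.graph.topologicalClosure)
    (hq : q ∈ B.graph.topologicalClosure) :
    ⟪p.2, q.1⟫ + ⟪p.1, q.2⟫ = 0 := by
  have hcl : IsClosed {r : H × H | ⟪r.2, q.1⟫ + ⟪r.1, q.2⟫ = (0 : ℂ)} :=
    isClosed_eq (((continuous_snd.inner continuous_const).add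
      (continuous_fst.inner continuous_const))) continuous_const
  have hsub : (B.graph : Set (H × H)) ⊆
      {r : H × H | ⟪r.2, q.1⟫ + ⟪r.1, q.2⟫ = (0 : ℂ)} := by
    rintro r hr
    rw [SetLike.mem_coe, LinearPMap.mem_graph_iff] at hr
    obtain ⟨ψ, h1, h2⟩ := hr
    simp only [Set.mem_setOf_eq, ← h1, ← h2]
    exact aux_pairing B hskew hq ψ
  exact closure_minimal hsub hcl hp


lemma aux_closable (B : H →ₗ.[ℂ] H) (hdense : Dense (B.domain : Set H))
    (hskew : ∀ φ ψ : B.domain, (inner ℂ (φ : H) (B ψ) : ℂ) = -(inner ℂ (B φ) (ψ : H) : ℂ)) :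
    B.IsClosable := by
  have hg : ∀ (x : H × H), x ∈ B.graph.topologicalClosure → x.fst = 0 → x.snd = 0 := by
    intro x hx hx1
    have h := fun φ : B.domain => aux_pairing B hskew hx φ
    simp only [hx1, inner_zero_right, zero_add] at h
    refine hdense.eq_zero_of_inner_left ℂ fun v hv => ?_
    rw [← inner_conj_symm, h ⟨v, hv⟩, map_zero]
  exact ⟨B.graph.topologicalClosure.toLinearPMap,
    (Submodule.toLinearPMap_graph_eq _ hg).symm⟩


lemma aux_closure_skew (B : H →ₗ.[ℂ] H) (hdense : Dense (B.domain : Set H))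
    (hskew : ∀ φ ψ : B.domain, (inner ℂ (φ : H) (B ψ) : ℂ) = -(inner ℂ (B φ) (ψ : H) : ℂ))
    (x y : B.closure.domain) :
    ⟪(B.closure x : H), (y : H)⟫ + ⟪(x : H), (B.closure y : H)⟫ = 0 := by
  have hgr := (aux_closable B hdense hskew).graph_closure_eq_closure_graph
  have hx : ((x : H), B.closure x) ∈ B.graph.topologicalClosure := by
    rw [hgr]; exact B.closure.mem_graph x
  have hy : ((y : H), B.closure y) ∈ B.graph.topologicalClosure := by
    rw [hgr]; exact B.closure.mem_graph y
  exact aux_pairing2 B hskew hx hy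

lemma aux_norm (B : H →ₗ.[ℂ] H) (hdense : Dense (B.domain : Set H))
    (hskew : ∀ φ ψ : B.domain, (inner ℂ (φ : H) (B ψ) : ℂ) = -(inner ℂ (B φ) (ψ : H) : ℂ))
    (c : ℝ) (x : B.closure.domain) :
    |c| * ‖(x : H)‖ ≤ ‖B.closure x + (c : ℂ) • (x : H)‖ := by
  have hre : Complex.re ⟪(B.closure x : H), (x : H)⟫ = 0 := by
    have h := aux_closure_skew B hdense hskew x x
    have h2 : ⟪(x : H), (B.closure x : H)⟫ =
        (starRingEnd ℂ) ⟪(B.closure x : H), (x : H)⟫ := (inner_conj_symm _ _).symm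
    rw [h2] at h
    have h3 := congrArg Complex.re h
    simp only [Complex.add_re, Complex.conj_re, Complex.zero_re] at h3
    linarith
  have hsq : (|c| * ‖(x : H)‖) ^ 2 ≤ ‖B.closure x + (c : ℂ) • (x : H)‖ ^ 2 := by
    rw [@norm_add_sq ℂ]
    simp only [RCLike.re_to_complex]
    have h1 : Complex.re ⟪(B.closure x : H), (c : ℂ) • (x : H)⟫ = 0 := by
      rw [inner_smul_right]
      simp [hre]
    rw [h1]
    have h2 : ‖(c : ℂ) • (x : H)‖ = |c| * ‖(x : H)‖ := by
      rw [norm_smul]; simp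
    rw [h2]
    nlinarith [norm_nonneg (B.closure x), sq_nonneg (‖B.closure x‖)]
  exact le_of_pow_le_pow_left₀ two_ne_zero (norm_nonneg _) hsq

lemma aux_range (B : H →ₗ.[ℂ] H) (hdense : Dense (B.domain : Set H))
    (hskew : ∀ φ ψ : B.domain, (inner ℂ (φ : H) (B ψ) : ℂ) = -(inner ℂ (B φ) (ψ : H) : ℂ))
    (c : ℝ) (hc : 0 < |c|)
    (hker : ∀ z : H, (∀ u : B.domain, ⟪(B u : H) + (c : ℂ) • (u : H), z⟫ = 0) → z = 0)
    (z : H) : ∃ u : B.closure.domain, B.closure u + (c : ℂ) • (u : H) = z := by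
  set T := B.closure with hT
  set f : T.domain →ₗ[ℂ] H := T.toFun + (c : ℂ) • T.domain.subtype with hfdef
  have hf : ∀ v : T.domain, f v = T v + (c : ℂ) • (v : H) := fun v => rfl
  set R := LinearMap.range f with hR
  -- R is closed
  have hRclosed : IsClosed (R : Set H) := by
    rw [← isSeqClosed_iff_isClosed]
    intro w z hw hwz
    choose u hu using hw
    have hcauchy : CauchySeq (fun n => (u n : H)) := by
      rw [Metric.cauchySeq_iff]
      intro ε hε
      have hwc : CauchySeq w := hwz.cauchySeq
      rw [Metric.cauchySeq_iff] at hwc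
      obtain ⟨N, hN⟩ := hwc (|c| * ε) (by positivity)
      refine ⟨N, fun m hm n hn => ?_⟩
      have hb := aux_norm B hdense hskew c (u m - u n)
      have hfs : f (u m - u n) = w m - w n := by rw [map_sub, hu, hu]
      rw [hf] at hfs
      have : |c| * ‖((u m - u n : T.domain) : H)‖ ≤ ‖w m - w n‖ := by
        rw [← hfs]; exact hb
      rw [Submodule.coe_sub] at this
      have hd := hN m hm n hn
      rw [dist_eq_norm] at hd ⊢
      nlinarith
    obtain ⟨x, hx⟩ := cauchySeq_tendsto_of_complete hcauchy
    have hTu : Filter.Tendsto (fun n => T (u n)) Filter.atTop (nhds (z - (c : ℂ) • x)) := by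
      have h1 : ∀ n, T (u n) = w n - (c : ℂ) • ((u n : H)) := by
        intro n
        have := hu n
        rw [hf] at this
        rw [← this]; module
      simp_rw [h1]
      exact hwz.sub (hx.const_smul _)
    have hgraph : ((x : H), z - (c : ℂ) • x) ∈ T.graph := by
      have hcl : T.IsClosed := (aux_closable B hdense hskew).closure_isClosed
      refine hcl.isSeqClosed (fun n => T.mem_graph (u n)) ?_
      exact hx.prodMk_nhds hTu
    rw [LinearPMap.mem_graph_iff] at hgraph
    obtain ⟨ψ, h1, h2⟩ := hgraph
    refine ⟨ψ, ?_⟩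
    rw [hf, h2, h1]
    module
  -- R is dense (orthogonal complement trivial)
  have hRorth : Rᗮ = ⊥ := by
    rw [Submodule.eq_bot_iff]
    intro v hv
    rw [Submodule.mem_orthogonal] at hv
    refine hker v fun u => ?_
    have hmem : (u : H) ∈ T.domain := (B.le_closure).1 u.2
    have hval : B u = T ⟨(u : H), hmem⟩ := (B.le_closure).2 rfl
    have : f ⟨(u : H), hmem⟩ ∈ R := LinearMap.mem_range_self f _
    have h0 := hv _ this
    rw [hf] at h0
    rw [hval]
    exact h0
  haveI : CompleteSpace R := hRclosed.completeSpace_coe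
  have hRtop : R = ⊤ := by
    rwa [Submodule.orthogonal_eq_bot_iff] at hRorth
  have hz : z ∈ R := by rw [hRtop]; trivial
  obtain ⟨u, hu⟩ := hz
  exact ⟨u, by rw [← hf, hu]⟩


lemma aux_kerP (B : H →ₗ.[ℂ] H) (hdense : Dense (B.domain : Set H)) (α : ℝ)
    (hkerPlus : ∀ x : B.adjoint.domain, B.adjoint x + (α : ℂ) • (x : H) = 0 → (x : H) = 0)
    (z : H) (h : ∀ u : B.domain, ⟪(B u : H) + ((α : ℝ) : ℂ) • (u : H), z⟫ = 0) : z = 0 := by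
  have hx₀ : ∀ u : B.domain, ⟪(-(α : ℂ)) • z, (u : H)⟫ = ⟪z, (B u : H)⟫ := by
    intro u
    have h1 := h u
    rw [inner_add_left, inner_smul_left] at h1
    have h2 := congrArg (starRingEnd ℂ) h1
    simp only [map_add, map_mul, inner_conj_symm, map_zero, RingHomCompTriple.comp_apply,
      Complex.conj_conj, RingHom.id_apply] at h2
    rw [inner_smul_left]
    simp only [map_neg, Complex.conj_ofReal]
    linear_combination -h2
  have hmem : z ∈ B.adjoint.domain :=
    LinearPMap.mem_adjoint_domain_of_exists (T := B) z ⟨(-(α : ℂ)) • z, hx₀⟩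
  have hval : B.adjoint ⟨z, hmem⟩ = (-(α : ℂ)) • z :=
    LinearPMap.adjoint_apply_eq hdense ⟨z, hmem⟩ hx₀
  refine hkerPlus ⟨z, hmem⟩ ?_
  rw [hval]
  module

lemma aux_kerM (B : H →ₗ.[ℂ] H) (hdense : Dense (B.domain : Set H)) (α : ℝ)
    (hkerMinus : ∀ x : B.adjoint.domain, B.adjoint x - (α : ℂ) • (x : H) = 0 → (x : H) = 0)
    (z : H) (h : ∀ u : B.domain, ⟪(B u : H) + ((-α : ℝ) : ℂ) • (u : H), z⟫ = 0) : z = 0 := by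
  have hx₀ : ∀ u : B.domain, ⟪(α : ℂ) • z, (u : H)⟫ = ⟪z, (B u : H)⟫ := by
    intro u
    have h1 := h u
    rw [inner_add_left, inner_smul_left] at h1
    have h2 := congrArg (starRingEnd ℂ) h1
    simp only [map_add, map_mul, inner_conj_symm, map_zero, RingHomCompTriple.comp_apply,
      Complex.conj_conj, RingHom.id_apply] at h2
    rw [inner_smul_left]
    simp only [Complex.conj_ofReal]
    simp only [Complex.ofReal_neg] at h2
    linear_combination -h2
  have hmem : z ∈ B.adjoint.domain :=
    LinearPMap.mem_adjoint_domain_of_exists (T := B) z ⟨(α : ℂ) • z, hx₀⟩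
  have hval : B.adjoint ⟨z, hmem⟩ = (α : ℂ) • z :=
    LinearPMap.adjoint_apply_eq hdense ⟨z, hmem⟩ hx₀
  refine hkerMinus ⟨z, hmem⟩ ?_
  rw [hval]
  module

end Aux

theorem stmt11 {H : Type*} [NormedAddCommGroup H] [InnerProductSpace ℂ H] [CompleteSpace H]
    (B : H →ₗ.[ℂ] H) (hdense : Dense (B.domain : Set H))
    (hskew : ∀ φ ψ : B.domain, (inner ℂ (φ : H) (B ψ) : ℂ) = -(inner ℂ (B φ) (ψ : H) : ℂ))
    (α : ℝ) (hα : 0 < α)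
    (hkerPlus : ∀ x : B.adjoint.domain, B.adjoint x + (α : ℂ) • (x : H) = 0 → (x : H) = 0)
    (hkerMinus : ∀ x : B.adjoint.domain, B.adjoint x - (α : ℂ) • (x : H) = 0 → (x : H) = 0) :
    B.IsClosable ∧ B.closure.adjoint = -B.closure := by
  have hcl := aux_closable B hdense hskew
  refine ⟨hcl, ?_⟩
  set T := B.closure with hTdef
  have hTdense : Dense (T.domain : Set H) :=
    hdense.mono fun x hx => (B.le_closure).1 hx
  -- direction 1 : -T ≤ T.adjoint
  have hformal : T.IsFormalAdjoint (-T) := by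
    intro x y
    rw [LinearPMap.neg_apply, inner_neg_right]
    have hs := aux_closure_skew B hdense hskew x y
    linear_combination hs
  have h1 : -T ≤ T.adjoint := hformal.le_adjoint hTdense
  -- surjectivity of T ± α
  have hsurjP := aux_range B hdense hskew α (by rwa [abs_of_pos hα])
    (aux_kerP B hdense α hkerPlus)
  have hsurjM := aux_range B hdense hskew (-α) (by rwa [abs_neg, abs_of_pos hα])
    (aux_kerM B hdense α hkerMinus)
  -- key: every adjoint-domain vector is in T.domain with opposite value
  have key : ∀ y : T.adjoint.domain,
      ∃ hy : (y : H) ∈ T.domain, T ⟨(y : H), hy⟩ = -(T.adjoint y) := by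
    intro y
    set w := T.adjoint y with hwdef
    obtain ⟨u, hu⟩ := hsurjM (-(w + (α : ℂ) • (y : H)))
    rw [Complex.ofReal_neg] at hu
    have orth : ∀ x : T.domain, (inner ℂ ((y : H) - (u : H)) ((T x : H) + (α : ℂ) • (x : H)) : ℂ) = 0 := by
      intro x
      have hw := (LinearPMap.adjoint_isFormalAdjoint hTdense) y x
      have hsk := aux_closure_skew B hdense hskew u x
      have hinner := congrArg (fun v => (inner ℂ v (x : H) : ℂ)) hu
      simp only [inner_add_left, inner_smul_left, inner_neg_left, map_neg,
        Complex.conj_ofReal] at hinner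
      rw [inner_sub_left, inner_add_right, inner_add_right, inner_smul_right,
        inner_smul_right]
      rw [← hw]
      linear_combination hinner - hsk
    have hyu : (y : H) = (u : H) := by
      have hz : ((y : H) - (u : H)) = 0 := by
        obtain ⟨x', hx'⟩ := hsurjP ((y : H) - (u : H))
        have h0 := orth x'
        rw [hx'] at h0
        exact inner_self_eq_zero.mp h0
      exact sub_eq_zero.mp hz
    have hy : (y : H) ∈ T.domain := hyu ▸ u.2
    refine ⟨hy, ?_⟩
    have hTy : T ⟨(y : H), hy⟩ = T u := by congr 1; exact Subtype.ext hyu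
    rw [hTy]
    rw [← hyu] at hu
    have h2' : (T u : H) = -(w + (α : ℂ) • (y : H)) - (-(α : ℂ)) • (y : H) :=
      eq_sub_of_add_eq hu
    rw [h2']
    module
  -- direction 2 : T.adjoint ≤ -T
  have h2 : T.adjoint ≤ -T := by
    refine ⟨fun z hz => (key ⟨z, hz⟩).1, fun a b hab => ?_⟩
    obtain ⟨hy, hval⟩ := key a
    rw [LinearPMap.neg_apply]
    have hb : T b = T ⟨(a : H), hy⟩ := by congr 1; exact Subtype.ext hab.symm
    rw [hb, hval, neg_neg]
  exact le_antisymm h2 h1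
end

section
/- Let S be a bounded nonnegative self-adjoint operator and A a bounded skew-self-adjoint operator on a Hilbert space H, and let L := -S + A. Then for λ > 0 the resolvent admits the factorization (λI - L)⁻¹ = (λI + S)^{-1/2} (I - C_λ)⁻¹ (λI + S)^{-1/2}, where C_λ := (λI + S)^{-1/2} A (λI + S)^{-1/2} is skew-self-adjoint with ‖(I - C_λ)⁻¹‖ ≤ 1. -/
open ContinuousLinearMap

theorem stmt17_aux {R : Type*} [Ring R] (r q a k : R)
    (h1 : r * q = 1) (h2 : q * r = 1)
    (h3 : (1 - q * (a * q)) * k = 1) (h4 : k * (1 - q * (a * q)) = 1) :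
    (r * r - a) * (q * (k * q)) = 1 ∧ (q * (k * q)) * (r * r - a) = 1 := by
  have e1 : (r * r - a) * q = r * (1 - q * (a * q)) := by
    calc (r * r - a) * q = r * (r * q) - a * q := by rw [sub_mul, mul_assoc]
      _ = r - a * q := by rw [h1, mul_one]
      _ = r - r * q * (a * q) := by rw [h1, one_mul]
      _ = r * (1 - q * (a * q)) := by rw [mul_sub, mul_one, mul_assoc]
  have e2 : q * (r * r - a) = (1 - q * (a * q)) * r := by
    calc q * (r * r - a) = q * r * r - q * a := by rw [mul_sub, mul_assoc]
      _ = r - q * a := by rw [h2, one_mul]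
      _ = r - q * (a * (q * r)) := by rw [h2, mul_one]
      _ = (1 - q * (a * q)) * r := by rw [sub_mul, one_mul, mul_assoc, mul_assoc]
  constructor
  · calc (r * r - a) * (q * (k * q))
        = ((r * r - a) * q) * (k * q) := by rw [mul_assoc]
      _ = (r * (1 - q * (a * q))) * (k * q) := by rw [e1]
      _ = r * (((1 - q * (a * q)) * k) * q) := by
          rw [mul_assoc, ← mul_assoc (1 - q * (a * q)) k q]
      _ = r * (1 * q) := by rw [h3]
      _ = 1 := by rw [one_mul, h1]
  · calc (q * (k * q)) * (r * r - a)
        = q * (k * (q * (r * r - a))) := by rw [mul_assoc, mul_assoc]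
      _ = q * (k * ((1 - q * (a * q)) * r)) := by rw [e2]
      _ = q * ((k * (1 - q * (a * q))) * r) := by rw [← mul_assoc k _ r]
      _ = q * (1 * r) := by rw [h4]
      _ = 1 := by rw [one_mul, h2]

theorem stmt17 {H : Type*} [NormedAddCommGroup H] [InnerProductSpace ℂ H] [CompleteSpace H]
    (S A : H →L[ℂ] H)
    (hSsa : IsSelfAdjoint S) (hSpos : ∀ f : H, 0 ≤ (inner ℂ f (S f) : ℂ).re)
    (hA : ContinuousLinearMap.adjoint A = -A)
    (lam : ℝ) (hlam : 0 < lam)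
    -- Rl = (lam I + S)^{1/2}, Ql = (lam I + S)^{-1/2}
    (Rl Ql : H →L[ℂ] H) (hRlsa : IsSelfAdjoint Rl)
    (hRlpos : ∀ f : H, 0 ≤ (inner ℂ f (Rl f) : ℂ).re)
    (hRl : Rl ∘L Rl = (lam : ℂ) • 1 + S)
    (hQl₁ : Rl ∘L Ql = 1) (hQl₂ : Ql ∘L Rl = 1)
    (Cl : H →L[ℂ] H) (hCl : Cl = Ql ∘L A ∘L Ql) :
    ContinuousLinearMap.adjoint Cl = -Cl ∧
    ∃ K : H →L[ℂ] H, (1 - Cl) ∘L K = 1 ∧ K ∘L (1 - Cl) = 1 ∧ ‖K‖ ≤ 1 ∧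
      ((lam : ℂ) • (1 : H →L[ℂ] H) - (-S + A)) ∘L (Ql ∘L K ∘L Ql) = 1 ∧
      (Ql ∘L K ∘L Ql) ∘L ((lam : ℂ) • (1 : H →L[ℂ] H) - (-S + A)) = 1 := by
  have hadj1 : ContinuousLinearMap.adjoint (1 : H →L[ℂ] H) = 1 := by
    rw [ContinuousLinearMap.one_def]; exact adjoint_id
  -- Ql is self-adjoint
  have hQlsa : ContinuousLinearMap.adjoint Ql = Ql := by
    have h1 : ContinuousLinearMap.adjoint Ql ∘L Rl = 1 := by
      have := congrArg ContinuousLinearMap.adjoint hQl₁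
      rwa [adjoint_comp, hRlsa.adjoint_eq, hadj1] at this
    calc ContinuousLinearMap.adjoint Ql
        = ContinuousLinearMap.adjoint Ql ∘L (Rl ∘L Ql) := by
          rw [hQl₁, ContinuousLinearMap.one_def, ContinuousLinearMap.comp_id]
      _ = (ContinuousLinearMap.adjoint Ql ∘L Rl) ∘L Ql := by rw [ContinuousLinearMap.comp_assoc]
      _ = Ql := by rw [h1, ContinuousLinearMap.one_def, ContinuousLinearMap.id_comp]
  have hClskew : ContinuousLinearMap.adjoint Cl = -Cl := by
    rw [hCl, adjoint_comp, adjoint_comp, hQlsa, hA]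
    rw [ContinuousLinearMap.comp_neg, ContinuousLinearMap.neg_comp,
      ContinuousLinearMap.comp_assoc]
  refine ⟨hClskew, ?_⟩
  -- Re ⟪f, Cl f⟫ = 0
  have hre : ∀ f : H, (inner ℂ f (Cl f) : ℂ).re = 0 := by
    intro f
    have h1 : (inner ℂ f (Cl f) : ℂ) = inner ℂ ((ContinuousLinearMap.adjoint Cl) f) f :=
      (adjoint_inner_left Cl f f).symm
    rw [hClskew] at h1
    have h3 : (inner ℂ (Cl f) f : ℂ) = starRingEnd ℂ (inner ℂ f (Cl f)) := by
      rw [← inner_conj_symm]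
    have h4 : (inner ℂ f (Cl f) : ℂ) = -starRingEnd ℂ (inner ℂ f (Cl f)) := by
      calc (inner ℂ f (Cl f) : ℂ) = inner ℂ ((-Cl) f) f := h1
        _ = inner ℂ (-(Cl f)) f := by rw [ContinuousLinearMap.neg_apply]
        _ = -(inner ℂ (Cl f) f) := by rw [inner_neg_left]
        _ = -starRingEnd ℂ (inner ℂ f (Cl f)) := by rw [h3]
    have h5 := congrArg Complex.re h4
    rw [Complex.neg_re, Complex.conj_re] at h5
    linarith
  set T : H →L[ℂ] H := 1 - Cl with hT
  -- T is bounded below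
  have hTlow : ∀ f : H, ‖f‖ ≤ ‖T f‖ := by
    intro f
    have h1 : T f = f - Cl f := by simp [hT]
    have h2 : ‖f - Cl f‖ ^ 2 = ‖f‖ ^ 2 - 2 * (inner ℂ f (Cl f) : ℂ).re + ‖Cl f‖ ^ 2 := by
      exact_mod_cast norm_sub_sq (𝕜 := ℂ) f (Cl f)
    have h3 : ‖f‖ ^ 2 ≤ ‖T f‖ ^ 2 := by
      rw [h1, h2, hre f]; nlinarith [sq_nonneg ‖Cl f‖]
    nlinarith [norm_nonneg (T f), norm_nonneg f]
  -- T† = 1 + Cl is bounded below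
  have hTadj : ContinuousLinearMap.adjoint T = 1 + Cl := by
    rw [hT, map_sub, hadj1, hClskew]; abel
  have hTadjlow : ∀ f : H, ‖f‖ ≤ ‖(ContinuousLinearMap.adjoint T) f‖ := by
    intro f
    have h1 : (ContinuousLinearMap.adjoint T) f = f + Cl f := by rw [hTadj]; simp
    have h2 : ‖f + Cl f‖ ^ 2 = ‖f‖ ^ 2 + 2 * (inner ℂ f (Cl f) : ℂ).re + ‖Cl f‖ ^ 2 := by
      exact_mod_cast norm_add_sq (𝕜 := ℂ) f (Cl f)
    have h3 : ‖f‖ ^ 2 ≤ ‖(ContinuousLinearMap.adjoint T) f‖ ^ 2 := by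
      rw [h1, h2, hre f]; nlinarith [sq_nonneg ‖Cl f‖]
    nlinarith [norm_nonneg ((ContinuousLinearMap.adjoint T) f), norm_nonneg f]
  -- ker T = ⊥
  have hker : T.ker = ⊥ := by
    rw [Submodule.eq_bot_iff]
    intro x hx
    have h0 : T x = 0 := hx
    have h1 := hTlow x
    rw [h0, norm_zero] at h1
    exact norm_le_zero_iff.mp h1
  -- range T closed
  have hanti : AntilipschitzWith 1 T :=
    ContinuousLinearMap.antilipschitz_of_bound T (fun x => by simpa using hTlow x)
  have hclosed : IsClosed (T.range : Set H) := by
    rw [LinearMap.coe_range]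
    exact hanti.isClosed_range T.uniformContinuous
  -- range T = ⊤
  have hrange : T.range = ⊤ := by
    haveI : CompleteSpace (T.range) := hclosed.completeSpace_coe
    rw [← Submodule.orthogonal_eq_bot_iff (K := T.range)]
    rw [Submodule.eq_bot_iff]
    intro x hx
    have hx' : ∀ y : H, (inner ℂ (T y) x : ℂ) = 0 := fun y =>
      hx (T y) (LinearMap.mem_range_self _ y)
    have hTx : (ContinuousLinearMap.adjoint T) x = 0 := by
      have h1 : (inner ℂ ((ContinuousLinearMap.adjoint T) x)
          ((ContinuousLinearMap.adjoint T) x) : ℂ) = 0 := by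
        rw [adjoint_inner_right]
        exact hx' _
      exact inner_self_eq_zero.mp h1
    have h2 := hTadjlow x
    rw [hTx, norm_zero] at h2
    exact norm_le_zero_iff.mp h2
  -- the inverse
  set e := ContinuousLinearEquiv.ofBijective T hker hrange with he
  set K : H →L[ℂ] H := (e.symm : H →L[ℂ] H) with hK
  have heT : ∀ x, e x = T x := fun x =>
    congrFun (ContinuousLinearEquiv.coeFn_ofBijective T hker hrange) x
  have hTK : ∀ x, T (K x) = x := by
    intro x
    have h := e.apply_symm_apply x
    rwa [heT] at h
  have hKT : ∀ x, K (T x) = x := by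
    intro x
    have h := e.symm_apply_apply x
    rwa [heT] at h
  have hTK' : T ∘L K = 1 := by ext x; exact hTK x
  have hKT' : K ∘L T = 1 := by ext x; exact hKT x
  have hKnorm : ‖K‖ ≤ 1 := by
    refine ContinuousLinearMap.opNorm_le_bound K zero_le_one (fun x => ?_)
    have h := hTlow (K x)
    rw [hTK x] at h
    simpa using h
  -- algebra of the factorization
  have hQ1 : Rl * Ql = 1 := hQl₁
  have hQ2 : Ql * Rl = 1 := hQl₂
  have h3 : (1 - Ql * (A * Ql)) * K = 1 := by
    rw [show (Ql * (A * Ql) : H →L[ℂ] H) = Cl from hCl.symm]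
    exact hTK'
  have h4 : K * (1 - Ql * (A * Ql)) = 1 := by
    rw [show (Ql * (A * Ql) : H →L[ℂ] H) = Cl from hCl.symm]
    exact hKT'
  obtain ⟨hfac1, hfac2⟩ := stmt17_aux Rl Ql A K hQ1 hQ2 h3 h4
  have key : ((lam : ℂ) • (1 : H →L[ℂ] H) - (-S + A)) = Rl ∘L Rl - A := by
    rw [hRl]; abel
  refine ⟨K, hTK', hKT', hKnorm, ?_, ?_⟩
  · rw [key]; exact hfac1
  · rw [key]; exact hfac2
end
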